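/- Let g₀ and g₂ be independent exponentially distributed random variables with rate parameters λ₀ > 0 and λ₂ > 0, and fix P > 0, Q > 0, σ₀² > 0 and R > 0. Then the outage probability p₀ = ℙ( log₂(1 + g₀P/(g₂Q + σ₀²)) < R ) equals 1 − [ (λ₂/((2^R−1)Q)) / (λ₀/P + λ₂/((2^R−1)Q)) ] · e^{−λ₀ σ₀² (2^R−1)/P}. -/

import Mathlib

open MeasureTheory ProbabilityTheory Real Set

lemma expMeasure_apply {r : ℝ} (s : Set ℝ) (hs : MeasurableSet s) :
    expMeasure r s = ∫⁻ x in s, exponentialPDF r x := by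
  rw [expMeasure, gammaMeasure, withDensity_apply _ hs]; rfl

lemma expMeasure_Iio_zero {r : ℝ} : expMeasure r (Iio 0) = 0 := by
  rw [expMeasure_apply _ measurableSet_Iio]
  exact lintegral_exponentialPDF_of_nonpos le_rfl

lemma expMeasure_Ici {r c : ℝ} (hr : 0 < r) (hc : 0 ≤ c) :
    expMeasure r (Ici c) = ENNReal.ofReal (rexp (-(r * c))) := by
  have hprob := isProbabilityMeasure_expMeasure hr
  have hIic : expMeasure r (Iic c) = ENNReal.ofReal (1 - rexp (-(r * c))) := by
    rw [expMeasure_apply _ measurableSet_Iic, lintegral_exponentialPDF_eq_antiDeriv hr, if_pos hc]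
  have hIio : expMeasure r (Iio c) = ENNReal.ofReal (1 - rexp (-(r * c))) := by
    rw [expMeasure_apply _ measurableSet_Iio, expMeasure_apply _ measurableSet_Iic] at *
    rw [setLIntegral_congr (Iio_ae_eq_Iic (μ := volume) (a := c))]
    exact hIic
  have : Ici c = (Iio c)ᶜ := by ext x; simp
  rw [this, measure_compl measurableSet_Iio (measure_ne_top _ _), hIio,
    measure_univ]
  have he : rexp (-(r*c)) ≤ 1 := by
    rw [Real.exp_le_one_iff]; nlinarith
  rw [(by simp : (1:ENNReal) = ENNReal.ofReal 1), ← ENNReal.ofReal_sub _ (by linarith)]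
  norm_num

/-- Closed form of the outage probability at the suspicious receiver:
`ℙ(log₂(1 + g₀ P / (g₂ Q + σ₀²)) < R)` for independent exponential gains `g₀ ~ Exp(λ₀)`,
`g₂ ~ Exp(λ₂)`. -/
theorem stmt_2 {Ω : Type*} [MeasurableSpace Ω] (μ : Measure Ω) [IsProbabilityMeasure μ]
    (g₀ g₂ : Ω → ℝ) (hg₀ : Measurable g₀) (hg₂ : Measurable g₂)
    (hIndep : IndepFun g₀ g₂ μ)
    (lam₀ lam₂ : ℝ) (hlam₀ : 0 < lam₀) (hlam₂ : 0 < lam₂)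
    (h₀ : Measure.map g₀ μ = expMeasure lam₀)
    (h₂ : Measure.map g₂ μ = expMeasure lam₂)
    (P Q σ₀sq R : ℝ) (hP : 0 < P) (hQ : 0 < Q) (hσ : 0 < σ₀sq) (hR : 0 < R) :
    (μ {ω | Real.logb 2 (1 + g₀ ω * P / (g₂ ω * Q + σ₀sq)) < R}).toReal =
      1 - (lam₂ / (((2 : ℝ) ^ R - 1) * Q)) /
            (lam₀ / P + lam₂ / (((2 : ℝ) ^ R - 1) * Q)) *
          Real.exp (-lam₀ * σ₀sq * ((2 : ℝ) ^ R - 1) / P) := by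
  have h2R : (1:ℝ) < (2:ℝ) ^ R := by
    rw [Real.one_lt_rpow_iff_of_pos (by norm_num)]
    exact Or.inl ⟨one_lt_two, hR⟩
  set a : ℝ := (2:ℝ) ^ R - 1 with ha_def
  have ha : 0 < a := by rw [ha_def]; linarith
  set α : ℝ := a / P with hα_def
  have hα : 0 < α := div_pos ha hP
  -- a.e. nonnegativity of the gains
  have hnull₀ : μ {ω | g₀ ω < 0} = 0 := by
    have h : {ω | g₀ ω < 0} = g₀ ⁻¹' (Iio 0) := rfl
    rw [h, ← Measure.map_apply hg₀ measurableSet_Iio, h₀, expMeasure_Iio_zero]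
  have hnull₂ : μ {ω | g₂ ω < 0} = 0 := by
    have h : {ω | g₂ ω < 0} = g₂ ⁻¹' (Iio 0) := rfl
    rw [h, ← Measure.map_apply hg₂ measurableSet_Iio, h₂, expMeasure_Iio_zero]
  have hae₀ : ∀ᵐ ω ∂μ, 0 ≤ g₀ ω := by
    rw [ae_iff]
    have h : {ω | ¬ 0 ≤ g₀ ω} = {ω | g₀ ω < 0} := by ext ω; simp [not_le]
    rw [h]; exact hnull₀
  have hae₂ : ∀ᵐ ω ∂μ, 0 ≤ g₂ ω := by
    rw [ae_iff]
    have h : {ω | ¬ 0 ≤ g₂ ω} = {ω | g₂ ω < 0} := by ext ω; simp [not_le]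
    rw [h]; exact hnull₂
  set S : Set Ω := {ω | g₀ ω < α * (g₂ ω * Q + σ₀sq)} with hS_def
  have hSm : MeasurableSet S := measurableSet_lt hg₀ (by fun_prop)
  have hTS : μ {ω | Real.logb 2 (1 + g₀ ω * P / (g₂ ω * Q + σ₀sq)) < R} = μ S := by
    apply measure_congr
    rw [Filter.eventuallyEq_set]
    filter_upwards [hae₀, hae₂] with ω h0 h2
    have hd : 0 < g₂ ω * Q + σ₀sq :=
      add_pos_of_nonneg_of_pos (mul_nonneg h2 hQ.le) hσ
    have hx : 0 < 1 + g₀ ω * P / (g₂ ω * Q + σ₀sq) := by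
      have h3 : 0 ≤ g₀ ω * P / (g₂ ω * Q + σ₀sq) :=
        div_nonneg (mul_nonneg h0 hP.le) hd.le
      linarith
    simp only [Set.mem_setOf_eq, hS_def]
    rw [Real.logb_lt_iff_lt_rpow one_lt_two hx]
    constructor
    · intro h
      have h' : g₀ ω * P / (g₂ ω * Q + σ₀sq) < a := by rw [ha_def]; linarith
      rw [div_lt_iff₀ hd] at h'
      rw [hα_def, div_mul_eq_mul_div, lt_div_iff₀ hP]
      linarith
    · intro h
      rw [hα_def, div_mul_eq_mul_div, lt_div_iff₀ hP] at h
      have h' : g₀ ω * P / (g₂ ω * Q + σ₀sq) < a := by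
        rw [div_lt_iff₀ hd]; linarith
      rw [ha_def] at h'; linarith
  -- compute the complement probability via the product measure
  have hU : MeasurableSet {p : ℝ × ℝ | α * (p.2 * Q + σ₀sq) ≤ p.1} :=
    measurableSet_le (by fun_prop) measurable_fst
  have hmap : μ.map (fun ω => (g₀ ω, g₂ ω)) = (expMeasure lam₀).prod (expMeasure lam₂) := by
    rw [← h₀, ← h₂]
    exact (indepFun_iff_map_prod_eq_prod_map_map hg₀.aemeasurable hg₂.aemeasurable).1 hIndep
  have hScset : Sᶜ = (fun ω => (g₀ ω, g₂ ω)) ⁻¹' {p : ℝ × ℝ | α * (p.2 * Q + σ₀sq) ≤ p.1} := by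
    ext ω; simp [hS_def, not_lt]
  set b : ℝ := lam₂ + lam₀ * α * Q with hb_def
  have hb : 0 < b := by positivity
  set C : ℝ := lam₂ * rexp (-(lam₀ * (α * σ₀sq))) with hC_def
  have hC : 0 < C := by positivity
  have haeexp : ∀ᵐ x ∂expMeasure lam₂, 0 ≤ x := by
    rw [ae_iff]
    have h : {x : ℝ | ¬ 0 ≤ x} = Iio 0 := by ext x; simp [not_le]
    rw [h]; exact expMeasure_Iio_zero
  haveI := isProbabilityMeasure_expMeasure hlam₀
  haveI := isProbabilityMeasure_expMeasure hlam₂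
  have hμSc : μ Sᶜ = ENNReal.ofReal (C * b⁻¹) := by
    rw [hScset, ← Measure.map_apply (hg₀.prodMk hg₂) hU, hmap,
      Measure.prod_apply_symm hU]
    have hcongr : (fun x : ℝ => expMeasure lam₀ ((fun y => (y, x)) ⁻¹'
          {p : ℝ × ℝ | α * (p.2 * Q + σ₀sq) ≤ p.1}))
        =ᵐ[expMeasure lam₂]
        (fun x : ℝ => ENNReal.ofReal (rexp (-(lam₀ * (α * (x * Q + σ₀sq)))))) := by
      filter_upwards [haeexp] with x hx
      have hpre : ((fun y => (y, x)) ⁻¹' {p : ℝ × ℝ | α * (p.2 * Q + σ₀sq) ≤ p.1})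
          = Ici (α * (x * Q + σ₀sq)) := rfl
      rw [hpre, expMeasure_Ici hlam₀ (by positivity)]
    have hmeas : Measurable (gammaPDF 1 lam₂) := (measurable_gammaPDFReal 1 lam₂).ennreal_ofReal
    have hgmeas : Measurable fun x : ℝ => ENNReal.ofReal (rexp (-(lam₀ * (α * (x * Q + σ₀sq))))) := by
      fun_prop
    rw [lintegral_congr_ae hcongr, expMeasure, gammaMeasure,
      lintegral_withDensity_eq_lintegral_mul _ hmeas hgmeas]
    have hsplit := lintegral_add_compl (μ := volume)
      (fun x : ℝ => (gammaPDF 1 lam₂ * fun x => ENNReal.ofReal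
        (rexp (-(lam₀ * (α * (x * Q + σ₀sq)))))) x)
      (measurableSet_Ici (a := (0:ℝ)))
    rw [← hsplit, compl_Ici]
    have hzero : ∫⁻ x in Iio (0:ℝ), (gammaPDF 1 lam₂ * fun x => ENNReal.ofReal
        (rexp (-(lam₀ * (α * (x * Q + σ₀sq)))))) x = 0 := by
      have hz : ∀ x ∈ Iio (0:ℝ), (gammaPDF 1 lam₂ * fun x => ENNReal.ofReal
          (rexp (-(lam₀ * (α * (x * Q + σ₀sq)))))) x = 0 := fun x hx => by
        simp only [Pi.mul_apply, gammaPDF_of_neg (show x < 0 from hx), zero_mul]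
      rw [setLIntegral_congr_fun measurableSet_Iio hz, lintegral_zero]
    rw [hzero, add_zero]
    have hmain : ∫⁻ x in Ici (0:ℝ), (gammaPDF 1 lam₂ * fun x => ENNReal.ofReal
        (rexp (-(lam₀ * (α * (x * Q + σ₀sq)))))) x
        = ∫⁻ x in Ici (0:ℝ), ENNReal.ofReal (C * rexp (-(b * x))) := by
      apply setLIntegral_congr_fun measurableSet_Ici
      refine fun x (hx : (0:ℝ) ≤ x) => ?_
      show gammaPDF 1 lam₂ x * ENNReal.ofReal _ = _
      have hpdf : gammaPDF 1 lam₂ x = exponentialPDF lam₂ x := rfl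
      rw [hpdf, exponentialPDF_of_nonneg hx,
        ← ENNReal.ofReal_mul (by positivity)]
      congr 1
      rw [hC_def, hb_def, mul_assoc, mul_assoc, ← Real.exp_add, ← Real.exp_add]
      congr 1
      ring
    rw [hmain, ← ofReal_integral_eq_lintegral_ofReal]
    · congr 1
      rw [MeasureTheory.integral_const_mul, integral_Ici_eq_integral_Ioi]
      have hint : ∫ x in Ioi (0:ℝ), rexp (-(b * x)) = b⁻¹ := by
        have h := integral_comp_mul_left_Ioi (fun x => rexp (-x)) 0 hb
        rw [mul_zero] at h
        rw [h, integral_exp_neg_Ioi, neg_zero, Real.exp_zero, smul_eq_mul, mul_one]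
      rw [hint]
    · have hI : IntegrableOn (fun x : ℝ => C * rexp (-(b * x))) (Ici 0) := by
        rw [integrableOn_Ici_iff_integrableOn_Ioi]
        have := (exp_neg_integrableOn_Ioi 0 hb).const_mul C
        simpa [neg_mul, IntegrableOn] using this
      exact hI
    · exact ae_of_all _ fun x => by positivity
  -- put things together
  rw [hTS]
  have h1 := prob_compl_eq_one_sub (μ := μ) hSm.compl
  rw [compl_compl] at h1
  have hle : ENNReal.ofReal (C * b⁻¹) ≤ 1 := hμSc ▸ prob_le_one
  rw [h1, hμSc, ENNReal.toReal_sub_of_le hle ENNReal.one_ne_top, ENNReal.toReal_one,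
    ENNReal.toReal_ofReal (by positivity)]
  have hexp : rexp (-(lam₀ * (α * σ₀sq))) = rexp (-lam₀ * σ₀sq * a / P) := by
    congr 1
    rw [hα_def]; ring
  rw [hC_def, hexp, hb_def, hα_def]
  have h1 : a * Q ≠ 0 := by positivity
  have h2 : lam₀ / P + lam₂ / (a * Q) ≠ 0 := by positivity
  have h3 : lam₂ + lam₀ * (a / P) * Q ≠ 0 := by positivity
  field_simp
  ring
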